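/- The limit as n → ∞ of (∑_{i+j+k+l=n, i,j,k,l≥1} a(i)a(j)a(k)a(l)) / a(n) equals 500/19683, where a(n) = 2(4n+1)!/((n+1)!(3n+2)!). -/

import Mathlib

open Filter Finset

noncomputable def a (n : ℕ) : ℝ :=
  2 * (Nat.factorial (4 * n + 1)) / ((Nat.factorial (n + 1)) * (Nat.factorial (3 * n + 2)))

/-- Raney numbers: `rb j n = [x^n] B(x)^(j+1)` where `B = 1 + x B^4`. -/
noncomputable def rb (j n : ℕ) : ℝ :=
  (j + 1) * (Nat.factorial (4 * n + j)) / ((Nat.factorial n) * (Nat.factorial (3 * n + j + 1)))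

lemma fact_pos' (m : ℕ) : (0:ℝ) < (Nat.factorial m : ℝ) := by
  exact_mod_cast Nat.factorial_pos m

lemma rb_pos (j n : ℕ) : 0 < rb j n := by
  unfold rb
  positivity

lemma rb_zero (j : ℕ) : rb j 0 = 1 := by
  have h := fact_pos' j
  unfold rb
  simp only [Nat.mul_zero, Nat.zero_add, Nat.zero_mul, Nat.factorial_zero, Nat.factorial_succ]
  push_cast
  rw [div_eq_one_iff_eq (by positivity)]
  ring

lemma rb_pascal (j n : ℕ) : rb (j+1) (n+1) = rb j (n+1) + rb (j+4) n := by
  unfold rb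
  have e1 : 4 * (n+1) + (j+1) = (4*n+j+4) + 1 := by ring
  have e2 : 3 * (n+1) + (j+1) + 1 = (3*n+j+4) + 1 := by ring
  have e3 : 4 * (n+1) + j = 4*n+j+4 := by ring
  have e4 : 3 * (n+1) + j + 1 = (3*n+j+3) + 1 := by ring
  have e5 : 4 * n + (j+4) = 4*n+j+4 := by ring
  have e6 : 3 * n + (j+4) + 1 = ((3*n+j+3) + 1) + 1 := by ring
  rw [e1, e2, e3, e4, e5, e6, Nat.factorial_succ ((3*n+j+3)+1), Nat.factorial_succ (4*n+j+4),
    Nat.factorial_succ (3*n+j+3), Nat.factorial_succ n]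
  have h1 := fact_pos' (4*n+j+4)
  have h2 := fact_pos' (3*n+j+3)
  have h3 := fact_pos' n
  push_cast
  field_simp
  ring

lemma rb_shift (n : ℕ) : rb 0 (n+1) = rb 3 n := by
  unfold rb
  have e1 : 4 * (n+1) + 0 = (4*n+3) + 1 := by ring
  have e2 : 3 * (n+1) + 0 + 1 = 3*n+3+1 := by ring
  rw [e1, e2, Nat.factorial_succ (4*n+3), Nat.factorial_succ n]
  have h1 := fact_pos' (4*n+3)
  have h2 := fact_pos' (3*n+3+1)
  have h3 := fact_pos' n
  push_cast
  field_simp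
  ring

lemma a_eq_rb (n : ℕ) : a n = 2 * rb 1 n - rb 2 n := by
  unfold a rb
  have e1 : 4*n+2 = (4*n+1)+1 := by ring
  have e2 : 3*n+2+1 = (3*n+2)+1 := by ring
  rw [e1, e2, Nat.factorial_succ (4*n+1), Nat.factorial_succ (3*n+2), Nat.factorial_succ n]
  have h1 := fact_pos' (4*n+1)
  have h2 := fact_pos' (3*n+2)
  have h3 := fact_pos' n
  have e3 : 3*n+1+1 = 3*n+2 := by ring
  rw [e3]
  push_cast
  field_simp
  ring

/-- The Raney convolution identity. -/
lemma rb_conv : ∀ n j, (∑ k ∈ range (n+1), rb 0 k * rb j (n - k)) = rb (j+1) n := by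
  intro n
  induction n with
  | zero => intro j; simp [rb_zero]
  | succ n IH =>
    intro j
    induction j with
    | zero =>
      have split : (∑ k ∈ range (n+2), rb 0 k * rb 0 (n + 1 - k))
          = (∑ k ∈ range (n+1), rb 0 k * rb 0 (n + 1 - k)) + rb 0 (n+1) * rb 0 0 := by
        rw [sum_range_succ]; simp
      rw [split]
      have step : ∀ k ∈ range (n+1), rb 0 k * rb 0 (n + 1 - k) = rb 0 k * rb 3 (n - k) := by
        intro k hk
        simp only [mem_range] at hk
        have h2 : n + 1 - k = (n - k) + 1 := by omega
        rw [h2, rb_shift]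
      rw [sum_congr rfl step, IH 3, rb_zero, mul_one, rb_pascal 0 n, rb_shift]
      ring
    | succ j IHj =>
      have split : (∑ k ∈ range (n+2), rb 0 k * rb (j+1) (n + 1 - k))
          = (∑ k ∈ range (n+1), rb 0 k * rb (j+1) (n + 1 - k)) + rb 0 (n+1) * rb (j+1) 0 := by
        rw [sum_range_succ]; simp
      rw [split]
      have step : ∀ k ∈ range (n+1), rb 0 k * rb (j+1) (n + 1 - k)
          = rb 0 k * rb j (n + 1 - k) + rb 0 k * rb (j+4) (n - k) := by
        intro k hk
        simp only [mem_range] at hk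
        have h2 : n + 1 - k = (n - k) + 1 := by omega
        rw [h2, rb_pascal j (n-k), ← h2]
        ring
      rw [sum_congr rfl step, sum_add_distrib, IH (j+4)]
      have recombine : (∑ k ∈ range (n+1), rb 0 k * rb j (n + 1 - k)) + rb 0 (n+1) * rb (j+1) 0
          = ∑ k ∈ range (n+2), rb 0 k * rb j (n + 1 - k) := by
        have h3 : rb (j+1) 0 = rb j 0 := by rw [rb_zero, rb_zero]
        rw [sum_range_succ _ (n+1), Nat.sub_self, h3]
      rw [add_right_comm, recombine, IHj]
      have p1 : rb (j+1+1) (n+1) = rb (j+1) (n+1) + rb (j+1+4) n := rb_pascal (j+1) n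
      have e : j+1+4 = j+4+1 := by ring
      rw [p1, e]

noncomputable def qr : ℝ := 27 / 256

lemma qr_pos : 0 < qr := by norm_num [qr]

lemma sum_conv_le (u v : ℕ → ℝ) (hu : ∀ n, 0 ≤ u n) (hv : ∀ n, 0 ≤ v n) (N : ℕ) :
    (∑ n ∈ range N, ∑ i ∈ range (n+1), u i * v (n-i))
      ≤ (∑ i ∈ range N, u i) * (∑ j ∈ range N, v j) := by
  have swap : (∑ n ∈ range N, ∑ i ∈ range (n+1), u i * v (n-i))
      = ∑ i ∈ range N, ∑ n ∈ Ico i N, u i * v (n-i) := by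
    apply Finset.sum_comm'
    intro n i
    simp only [mem_range, mem_Ico]
    omega
  rw [swap]
  calc ∑ i ∈ range N, ∑ n ∈ Ico i N, u i * v (n-i)
      = ∑ i ∈ range N, u i * ∑ m ∈ range (N - i), v m := by
        apply sum_congr rfl; intro i _
        rw [Finset.sum_Ico_eq_sum_range, mul_sum]
        apply sum_congr rfl; intro m _
        congr 2
        omega
    _ ≤ ∑ i ∈ range N, u i * ∑ m ∈ range N, v m := by
        apply sum_le_sum; intro i _
        apply mul_le_mul_of_nonneg_left _ (hu i)
        apply sum_le_sum_of_subset_of_nonneg (range_subset_range.mpr (by omega))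
        exact fun m _ _ => hv m
    _ = (∑ i ∈ range N, u i) * (∑ j ∈ range N, v j) := by rw [sum_mul]

lemma rb_term_conv (j n : ℕ) : rb (j+1) n * qr^n
    = ∑ i ∈ range (n+1), (rb 0 i * qr^i) * (rb j (n-i) * qr^(n-i)) := by
  rw [← rb_conv n j, sum_mul]
  apply sum_congr rfl; intro i hi
  simp only [mem_range] at hi
  have hp : qr^i * qr^(n-i) = qr^n := by rw [← pow_add]; congr 1; omega
  calc rb 0 i * rb j (n - i) * qr ^ n = (rb 0 i * rb j (n-i)) * (qr^i * qr^(n-i)) := by rw [hp]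
    _ = (rb 0 i * qr^i) * (rb j (n-i) * qr^(n-i)) := by ring

lemma conv_partial_le (j N : ℕ) :
    (∑ n ∈ range N, rb (j+1) n * qr^n)
      ≤ (∑ n ∈ range N, rb 0 n * qr^n) * (∑ n ∈ range N, rb j n * qr^n) := by
  have : (∑ n ∈ range N, rb (j+1) n * qr^n)
      = ∑ n ∈ range N, ∑ i ∈ range (n+1), (rb 0 i * qr^i) * (rb j (n-i) * qr^(n-i)) := by
    apply sum_congr rfl; intro n _; exact rb_term_conv j n
  rw [this]
  exact sum_conv_le _ _ (fun n => le_of_lt (mul_pos (rb_pos 0 n) (pow_pos qr_pos n)))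
    (fun n => le_of_lt (mul_pos (rb_pos j n) (pow_pos qr_pos n))) N

lemma rb_qr_nonneg (j n : ℕ) : 0 ≤ rb j n * qr^n := by
  have := rb_pos j n
  have := qr_pos
  positivity

lemma partial_nonneg (j N : ℕ) : 0 ≤ ∑ n ∈ range N, rb j n * qr^n :=
  sum_nonneg fun n _ => rb_qr_nonneg j n

lemma partial_le : ∀ N, (∑ n ∈ range N, rb 0 n * qr^n) ≤ 4/3 := by
  intro N
  induction N with
  | zero => simp; norm_num
  | succ N IH =>
    rw [Finset.sum_range_succ']
    have e0 : rb 0 0 * qr^0 = 1 := by rw [rb_zero]; simp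
    have eshift : ∀ i, rb 0 (i+1) * qr^(i+1) = qr * (rb 3 i * qr^i) := by
      intro i; rw [rb_shift, pow_succ]; ring
    rw [e0, sum_congr rfl fun i _ => eshift i, ← mul_sum]
    have P := partial_nonneg 0 N
    have c3 := conv_partial_le 2 N
    have c2 := conv_partial_le 1 N
    have c1 := conv_partial_le 0 N
    have hP4 : (∑ n ∈ range N, rb 3 n * qr^n)
        ≤ (∑ n ∈ range N, rb 0 n * qr^n)^4 := by
      have h2 := partial_nonneg 1 N
      have h3 := partial_nonneg 2 N
      nlinarith [partial_nonneg 3 N]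
    have hb : (∑ n ∈ range N, rb 0 n * qr^n)^4 ≤ (4/3)^4 := by
      apply pow_le_pow_left₀ P IH
    have : qr * (∑ n ∈ range N, rb 3 n * qr^n) ≤ qr * (4/3)^4 := by
      apply mul_le_mul_of_nonneg_left (le_trans hP4 hb) (le_of_lt qr_pos)
    have : qr * (∑ n ∈ range N, rb 3 n * qr^n) + 1 ≤ 4/3 := by
      have hq : qr * (4/3)^4 = 1/3 := by norm_num [qr]
      linarith
    linarith

lemma summable_t0 : Summable (fun n => rb 0 n * qr^n) :=
  summable_of_sum_range_le (fun n => rb_qr_nonneg 0 n) partial_le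

noncomputable def s0 : ℝ := ∑' n, rb 0 n * qr^n

lemma hs0 : HasSum (fun n => rb 0 n * qr^n) s0 := summable_t0.hasSum

lemma cauchy (f g : ℕ → ℝ) (Sf Sg : ℝ) (hf0 : ∀ n, 0 ≤ f n) (hg0 : ∀ n, 0 ≤ g n)
    (hf : HasSum f Sf) (hg : HasSum g Sg) :
    HasSum (fun n => ∑ i ∈ range (n+1), f i * g (n-i)) (Sf * Sg) := by
  have hfn : Summable (fun n => ‖f n‖) := by
    have : (fun n => ‖f n‖) = f := funext fun n => Real.norm_of_nonneg (hf0 n)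
    rw [this]; exact hf.summable
  have hgn : Summable (fun n => ‖g n‖) := by
    have : (fun n => ‖g n‖) = g := funext fun n => Real.norm_of_nonneg (hg0 n)
    rw [this]; exact hg.summable
  have hsum2 : Summable (fun n => ∑ i ∈ range (n+1), f i * g (n-i)) :=
    (summable_norm_sum_mul_range_of_summable_norm hfn hgn).of_norm
  have hval := tsum_mul_tsum_eq_tsum_sum_range_of_summable_norm hfn hgn
  rw [hf.tsum_eq, hg.tsum_eq] at hval
  exact hval ▸ hsum2.hasSum

lemma hs_rb_succ (j : ℕ) (Sj : ℝ) (hj : HasSum (fun n => rb j n * qr^n) Sj) :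
    HasSum (fun n => rb (j+1) n * qr^n) (s0 * Sj) := by
  have h := cauchy _ _ _ _ (fun n => rb_qr_nonneg 0 n) (fun n => rb_qr_nonneg j n) hs0 hj
  have e : (fun n => ∑ i ∈ range (n+1), (rb 0 i * qr^i) * (rb j (n-i) * qr^(n-i)))
      = fun n => rb (j+1) n * qr^n := funext fun n => (rb_term_conv j n).symm
  rwa [e] at h

lemma hs1 : HasSum (fun n => rb 1 n * qr^n) (s0 * s0) := hs_rb_succ 0 s0 hs0
lemma hs2 : HasSum (fun n => rb 2 n * qr^n) (s0 * (s0 * s0)) := hs_rb_succ 1 _ hs1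
lemma hs3 : HasSum (fun n => rb 3 n * qr^n) (s0 * (s0 * (s0 * s0))) := hs_rb_succ 2 _ hs2

lemma s0_val : s0 = 4/3 := by
  have heq : s0 = 1 + qr * (s0 * (s0 * (s0 * s0))) := by
    have h := Summable.tsum_eq_zero_add summable_t0
    have e0 : rb 0 0 * qr^0 = 1 := by rw [rb_zero]; simp
    have eshift : (fun n => rb 0 (n+1) * qr^(n+1)) = fun n => qr * (rb 3 n * qr^n) :=
      funext fun i => by rw [rb_shift, pow_succ]; ring
    have h4 : (∑' n, rb 0 (n+1) * qr^(n+1)) = qr * (s0 * (s0 * (s0 * s0))) := by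
      rw [eshift]; exact (hs3.mul_left qr).tsum_eq
    rw [e0, h4] at h
    exact h
  have hnn : 0 ≤ s0 := tsum_nonneg fun n => rb_qr_nonneg 0 n
  have hq : qr = 27/256 := rfl
  rw [hq] at heq
  have key : (3*s0 - 4)^2 * (3*s0^2 + 8*s0 + 16) = 0 := by linear_combination (-256 : ℝ) * heq
  have pos : 0 < 3*s0^2 + 8*s0 + 16 := by nlinarith [sq_nonneg s0]
  have h2 : (3*s0 - 4)^2 = 0 := by
    rcases mul_eq_zero.mp key with h | h
    · exact h
    · exact absurd h (ne_of_gt pos)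
  have h3 : 3*s0 - 4 = 0 := by
    have := sq_eq_zero_iff.mp h2
    linarith [this]
  linarith

lemma hsa : HasSum (fun n => a n * qr^n) (32/27) := by
  have h1 := hs1
  have h2 := hs2
  rw [s0_val] at h1 h2
  have h := (h1.mul_left 2).sub h2
  have e : (fun n => 2 * (rb 1 n * qr^n) - rb 2 n * qr^n) = fun n => a n * qr^n :=
    funext fun n => by rw [a_eq_rb]; ring
  rw [e] at h
  rwa [show (32/27:ℝ) = 2 * (4 / 3 * (4 / 3)) - 4 / 3 * (4 / 3 * (4 / 3)) by norm_num]

lemma a_pos (n : ℕ) : 0 < a n := by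
  unfold a
  have h1 := fact_pos' (4*n+1)
  have h2 := fact_pos' (n+1)
  have h3 := fact_pos' (3*n+2)
  positivity

lemma a_zero : a 0 = 1 := by
  unfold a
  norm_num [Nat.factorial]

lemma a_succ_eq (n : ℕ) : a (n+1) * (((n:ℝ)+2)*(3*n+3)*(3*n+4)*(3*n+5))
    = a n * ((4*(n:ℝ)+2)*(4*n+3)*(4*n+4)*(4*n+5)) := by
  unfold a
  have e1 : 4*(n+1)+1 = ((((4*n+1)+1)+1)+1)+1 := by ring
  have e2 : 3*(n+1)+2 = (((3*n+2)+1)+1)+1 := by ring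
  rw [e1, e2, Nat.factorial_succ ((((4*n+1)+1)+1)+1), Nat.factorial_succ (((4*n+1)+1)+1),
    Nat.factorial_succ ((4*n+1)+1), Nat.factorial_succ (4*n+1),
    Nat.factorial_succ (((3*n+2)+1)+1), Nat.factorial_succ ((3*n+2)+1),
    Nat.factorial_succ (3*n+2), Nat.factorial_succ (n+1)]
  have h1 := fact_pos' (4*n+1)
  have h2 := fact_pos' (n+1)
  have h3 := fact_pos' (3*n+2)
  push_cast
  field_simp
  ring

lemma a_lower (n : ℕ) : qr * a (n+1) ≤ a n := by
  have h := a_succ_eq n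
  have hD : (0:ℝ) < ((n:ℝ)+2)*(3*n+3)*(3*n+4)*(3*n+5) := by positivity
  have hx : (0:ℝ) ≤ (n:ℝ) := Nat.cast_nonneg n
  rw [show qr = 27/256 from rfl]
  rw [div_mul_eq_mul_div, div_le_iff₀ (by norm_num : (0:ℝ) < 256)]
  -- 27 * a (n+1) ≤ a n * 256
  have key : 27 * ((4*(n:ℝ)+2)*(4*n+3)*(4*n+4)*(4*n+5)) ≤ 256 * (((n:ℝ)+2)*(3*n+3)*(3*n+4)*(3*n+5)) := by
    nlinarith [hx, mul_nonneg hx hx, mul_nonneg (mul_nonneg hx hx) hx]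
  nlinarith [a_pos (n+1), a_pos n, mul_le_mul_of_nonneg_left key (le_of_lt (a_pos (n+1)))]

lemma a_upper (n : ℕ) : a n ≤ qr * (((n:ℝ)+11)/((n:ℝ)+1)) * a (n+1) := by
  have h := a_succ_eq n
  have hx : (0:ℝ) ≤ (n:ℝ) := Nat.cast_nonneg n
  have hn1 : (0:ℝ) < (n:ℝ)+1 := by linarith
  have key : 256 * ((((n:ℝ)+2)*(3*n+3)*(3*n+4)*(3*n+5)) * ((n:ℝ)+1))
      ≤ 27 * (((4*(n:ℝ)+2)*(4*n+3)*(4*n+4)*(4*n+5)) * ((n:ℝ)+11)) := by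
    nlinarith [hx, mul_nonneg hx hx, mul_nonneg (mul_nonneg hx hx) hx,
      mul_nonneg (mul_nonneg (mul_nonneg hx hx) hx) hx]
  have hK : (0:ℝ) < (4*(n:ℝ)+2)*(4*n+3)*(4*n+4)*(4*n+5) := by positivity
  have ha1 := a_pos (n+1)
  have step : (a n * (256 * ((n:ℝ)+1))) * ((4*(n:ℝ)+2)*(4*n+3)*(4*n+4)*(4*n+5))
      ≤ (a (n+1) * (27 * ((n:ℝ)+11))) * ((4*(n:ℝ)+2)*(4*n+3)*(4*n+4)*(4*n+5)) := by
    calc (a n * (256 * ((n:ℝ)+1))) * ((4*(n:ℝ)+2)*(4*n+3)*(4*n+4)*(4*n+5))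
        = a (n+1) * (256 * ((((n:ℝ)+2)*(3*n+3)*(3*n+4)*(3*n+5)) * ((n:ℝ)+1))) := by
          linear_combination (-(256 * ((n:ℝ)+1))) * h
      _ ≤ a (n+1) * (27 * (((4*(n:ℝ)+2)*(4*n+3)*(4*n+4)*(4*n+5)) * ((n:ℝ)+11))) := by
          apply mul_le_mul_of_nonneg_left _ (le_of_lt ha1)
          nlinarith [key]
      _ = (a (n+1) * (27 * ((n:ℝ)+11))) * ((4*(n:ℝ)+2)*(4*n+3)*(4*n+4)*(4*n+5)) := by ring
  have step2 : a n * (256*((n:ℝ)+1)) ≤ a (n+1) * (27*((n:ℝ)+11)) :=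
    le_of_mul_le_mul_right step hK
  rw [show qr = 27/256 from rfl]
  have e : 27/256 * (((n:ℝ)+11)/((n:ℝ)+1)) * a (n+1)
      = (a (n+1) * (27*((n:ℝ)+11))) / (256*((n:ℝ)+1)) := by
    field_simp
  rw [e, le_div_iff₀ (by positivity)]
  exact step2

lemma prod_shift (x : ℝ) : (∏ t ∈ range 10, (x+1+(t:ℝ))) * (x+11) = (x+1) * ∏ t ∈ range 10, (x+2+(t:ℝ)) := by
  have h1 : ∏ t ∈ range 11, (x+1+(t:ℝ)) = (∏ t ∈ range 10, (x+1+(t:ℝ))) * (x+11) := by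
    rw [prod_range_succ]
    congr 1
    push_cast
    ring
  have h2 : ∏ t ∈ range 11, (x+1+(t:ℝ)) = (∏ t ∈ range 10, (x+2+(t:ℝ))) * (x+1) := by
    rw [prod_range_succ']
    have e : ∀ t ∈ range 10, (x+1+((t+1:ℕ):ℝ)) = (x+2+(t:ℝ)) := by
      intro t _
      push_cast
      ring
    rw [prod_congr rfl e]
    norm_num
  rw [← h1, h2]
  ring

lemma a_prod_bound (d m : ℕ) :
    a m * (∏ t ∈ range 10, ((m:ℝ)+1+(t:ℝ)))
      ≤ qr^d * (∏ t ∈ range 10, ((m:ℝ)+(d:ℝ)+1+(t:ℝ))) * a (m+d) := by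
  induction d with
  | zero =>
    have e : (∏ t ∈ range 10, ((m:ℝ)+((0:ℕ):ℝ)+1+(t:ℝ))) = ∏ t ∈ range 10, ((m:ℝ)+1+(t:ℝ)) := by
      apply prod_congr rfl
      intro t _
      push_cast
      ring
    rw [e, pow_zero, one_mul, Nat.add_zero]
    apply le_of_eq
    ring
  | succ d IH =>
    have hD : (0:ℝ) < ∏ t ∈ range 10, ((m:ℝ)+(d:ℝ)+1+(t:ℝ)) := by
      apply prod_pos
      intro t _
      positivity
    have hy : (0:ℝ) < (m:ℝ)+(d:ℝ)+1 := by positivity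
    have hstep : a (m+d) ≤ qr * ((((m:ℝ)+(d:ℝ))+11)/(((m:ℝ)+(d:ℝ))+1)) * a ((m+d)+1) := by
      have h := a_upper (m+d)
      push_cast at h
      convert h using 3
    have hfac : (0:ℝ) ≤ qr^d * (∏ t ∈ range 10, ((m:ℝ)+(d:ℝ)+1+(t:ℝ))) :=
      mul_nonneg (le_of_lt (pow_pos qr_pos d)) (le_of_lt hD)
    have ecast : (∏ t ∈ range 10, ((m:ℝ)+(((d+1:ℕ)):ℝ)+1+(t:ℝ)))
        = ∏ t ∈ range 10, (((m:ℝ)+(d:ℝ))+2+(t:ℝ)) := by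
      apply prod_congr rfl
      intro t _
      push_cast
      ring
    have hprod := prod_shift ((m:ℝ)+(d:ℝ))
    calc a m * (∏ t ∈ range 10, ((m:ℝ)+1+(t:ℝ)))
        ≤ qr^d * (∏ t ∈ range 10, ((m:ℝ)+(d:ℝ)+1+(t:ℝ))) * a (m+d) := IH
      _ ≤ qr^d * (∏ t ∈ range 10, ((m:ℝ)+(d:ℝ)+1+(t:ℝ)))
            * (qr * ((((m:ℝ)+(d:ℝ))+11)/(((m:ℝ)+(d:ℝ))+1)) * a ((m+d)+1)) :=
          mul_le_mul_of_nonneg_left hstep hfac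
      _ = qr^(d+1) * ((∏ t ∈ range 10, ((m:ℝ)+(d:ℝ)+1+(t:ℝ))) * ((((m:ℝ)+(d:ℝ))+11))
            / (((m:ℝ)+(d:ℝ))+1)) * a (m+(d+1)) := by
          rw [show m+(d+1) = (m+d)+1 from rfl]
          ring
      _ = qr^(d+1) * (∏ t ∈ range 10, ((m:ℝ)+(((d+1:ℕ)):ℝ)+1+(t:ℝ))) * a (m+(d+1)) := by
          rw [ecast, hprod, mul_comm ((((m:ℝ)+(d:ℝ))+1)) (∏ t ∈ range 10, (((m:ℝ)+(d:ℝ))+2+(t:ℝ))),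
            mul_div_assoc, div_self (ne_of_gt hy), mul_one]

lemma a_dom (d m : ℕ) (h : d ≤ m + 1) : a m ≤ 1024 * qr^d * a (m+d) := by
  have hp := a_prod_bound d m
  have hD : (0:ℝ) < ∏ t ∈ range 10, ((m:ℝ)+1+(t:ℝ)) := by
    apply prod_pos
    intro t _
    positivity
  have hN : (∏ t ∈ range 10, ((m:ℝ)+(d:ℝ)+1+(t:ℝ))) ≤ 1024 * ∏ t ∈ range 10, ((m:ℝ)+1+(t:ℝ)) := by
    have e : (1024:ℝ) * ∏ t ∈ range 10, ((m:ℝ)+1+(t:ℝ)) = ∏ t ∈ range 10, (2*((m:ℝ)+1+(t:ℝ))) := by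
      rw [prod_mul_distrib, prod_const]
      norm_num
    rw [e]
    apply Finset.prod_le_prod
    · intro t _; positivity
    · intro t _
      have hd : (d:ℝ) ≤ (m:ℝ) + 1 := by exact_mod_cast h
      have ht : (0:ℝ) ≤ (t:ℝ) := Nat.cast_nonneg t
      linarith
  have chain : a m * (∏ t ∈ range 10, ((m:ℝ)+1+(t:ℝ)))
      ≤ (1024 * qr^d * a (m+d)) * (∏ t ∈ range 10, ((m:ℝ)+1+(t:ℝ))) := by
    calc a m * (∏ t ∈ range 10, ((m:ℝ)+1+(t:ℝ)))
        ≤ qr^d * (∏ t ∈ range 10, ((m:ℝ)+(d:ℝ)+1+(t:ℝ))) * a (m+d) := hp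
      _ ≤ qr^d * (1024 * ∏ t ∈ range 10, ((m:ℝ)+1+(t:ℝ))) * a (m+d) := by
          apply mul_le_mul_of_nonneg_right _ (le_of_lt (a_pos (m+d)))
          exact mul_le_mul_of_nonneg_left hN (le_of_lt (pow_pos qr_pos d))
      _ = (1024 * qr^d * a (m+d)) * (∏ t ∈ range 10, ((m:ℝ)+1+(t:ℝ))) := by ring
  exact le_of_mul_le_mul_right chain hD

lemma q_tendsto : Tendsto (fun n : ℕ => a n / a (n+1)) atTop (nhds qr) := by
  have hlow : ∀ n : ℕ, qr ≤ a n / a (n+1) := by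
    intro n
    rw [le_div_iff₀ (a_pos (n+1))]
    exact a_lower n
  have hup : ∀ n : ℕ, a n / a (n+1) ≤ qr * (1 + 10 * (1 / ((n:ℝ)+1))) := by
    intro n
    rw [div_le_iff₀ (a_pos (n+1))]
    have h := a_upper n
    have e2 : (1 + 10 * (1 / ((n:ℝ)+1))) = (((n:ℝ)+11)/((n:ℝ)+1)) := by
      have hne : ((n:ℝ)+1) ≠ 0 := by positivity
      field_simp
      ring
    rw [e2]
    exact h
  have hub : Tendsto (fun n : ℕ => qr * (1 + 10 * (1 / ((n:ℝ)+1)))) atTop (nhds qr) := by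
    have h0 : Tendsto (fun n : ℕ => 1 / ((n:ℝ)+1)) atTop (nhds 0) :=
      tendsto_one_div_add_atTop_nhds_zero_nat
    have := ((h0.const_mul (10:ℝ)).const_add (1:ℝ)).const_mul qr
    simpa using this
  exact tendsto_of_tendsto_of_tendsto_of_le_of_le tendsto_const_nhds hub hlow hup

lemma adiv_tendsto (i : ℕ) : Tendsto (fun m : ℕ => a m / a (m + i)) atTop (nhds (qr ^ i)) := by
  induction i with
  | zero =>
    have e : (fun m : ℕ => a m / a (m + 0)) = fun _ => 1 :=
      funext fun m => div_self (ne_of_gt (a_pos m))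
    rw [e, pow_zero]
    exact tendsto_const_nhds
  | succ i IH =>
    have e : (fun m : ℕ => a m / a (m + (i+1)))
        = fun m => (a m / a (m + i)) * (a (m + i) / a ((m + i) + 1)) := by
      funext m
      rw [div_mul_div_cancel₀ (ne_of_gt (a_pos (m+i))), show m+(i+1) = (m+i)+1 from rfl]
    rw [e, pow_succ]
    exact IH.mul (q_tendsto.comp (tendsto_add_atTop_nat i))

lemma ratio_tendsto (i : ℕ) : Tendsto (fun n : ℕ => a (n - i) / a n) atTop (nhds (qr ^ i)) := by
  have h := (adiv_tendsto i).comp (tendsto_sub_atTop_nat i)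
  apply h.congr'
  filter_upwards [eventually_ge_atTop i] with n hn
  simp only [Function.comp]
  rw [Nat.sub_add_cancel hn]

lemma qr_pow_nonneg (i : ℕ) : (0:ℝ) ≤ qr^i := le_of_lt (pow_pos qr_pos i)

lemma tail_bound (f : ℕ → ℝ) (hf : ∀ n, 0 ≤ f n) (S : ℝ)
    (hS : HasSum (fun n => f n * qr^n) S) (M X : ℕ) :
    (∑ i ∈ Ico M X, f i * qr^i) ≤ S - ∑ i ∈ range M, f i * qr^i := by
  have hrange : ∀ Y, (∑ i ∈ range Y, f i * qr^i) ≤ S := fun Y =>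
    sum_le_hasSum (range Y) (fun i _ => mul_nonneg (hf i) (qr_pow_nonneg i)) hS
  rcases le_or_gt M X with h | h
  · rw [sum_Ico_eq_sub _ h]
    linarith [hrange X]
  · rw [Ico_eq_empty (by omega)]
    simp only [sum_empty]
    linarith [hrange M]

lemma head_tendsto (v : ℕ → ℝ) (V : ℝ)
    (hV : Tendsto (fun n => v n / a n) atTop (nhds V)) (i : ℕ) :
    Tendsto (fun n : ℕ => v (n - i) / a n) atTop (nhds (V * qr^i)) := by
  have h1 := (hV.comp (tendsto_sub_atTop_nat i)).mul (ratio_tendsto i)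
  apply h1.congr
  intro n
  simp only [Function.comp]
  rw [div_mul_div_cancel₀ (ne_of_gt (a_pos (n-i)))]

lemma conv_tendsto (u v : ℕ → ℝ) (hu0 : ∀ n, 0 ≤ u n) (hv0 : ∀ n, 0 ≤ v n)
    (U V Su Sv : ℝ)
    (hU : Tendsto (fun n => u n / a n) atTop (nhds U))
    (hV : Tendsto (fun n => v n / a n) atTop (nhds V))
    (hSu : HasSum (fun n => u n * qr ^ n) Su)
    (hSv : HasSum (fun n => v n * qr ^ n) Sv) :
    Tendsto (fun n => (∑ i ∈ range (n+1), u i * v (n-i)) / a n) atTop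
      (nhds (V * Su + U * Sv)) := by
  obtain ⟨Ku0, hKu0⟩ := hU.bddAbove_range
  obtain ⟨Kv0, hKv0⟩ := hV.bddAbove_range
  set Ku := max Ku0 0 with hKudef
  set Kv := max Kv0 0 with hKvdef
  have hKu_nonneg : 0 ≤ Ku := le_max_right _ _
  have hKv_nonneg : 0 ≤ Kv := le_max_right _ _
  have hKu : ∀ n, u n ≤ Ku * a n := by
    intro n
    have h1 : u n / a n ≤ Ku := le_trans (hKu0 (Set.mem_range_self n)) (le_max_left _ _)
    exact (div_le_iff₀ (a_pos n)).mp h1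
  have hKv : ∀ n, v n ≤ Kv * a n := by
    intro n
    have h1 : v n / a n ≤ Kv := le_trans (hKv0 (Set.mem_range_self n)) (le_max_left _ _)
    exact (div_le_iff₀ (a_pos n)).mp h1
  -- partial sums
  set pu : ℕ → ℝ := fun M => ∑ i ∈ range M, u i * qr^i with hpudef
  set pv : ℕ → ℝ := fun M => ∑ i ∈ range M, v i * qr^i with hpvdef
  have hpuS : Tendsto pu atTop (nhds Su) := hSu.tendsto_sum_nat
  have hpvS : Tendsto pv atTop (nhds Sv) := hSv.tendsto_sum_nat
  have htailu : ∀ M X, (∑ i ∈ Ico M X, u i * qr^i) ≤ Su - pu M := fun M X =>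
    tail_bound u hu0 Su hSu M X
  have htailv : ∀ M X, (∑ i ∈ Ico M X, v i * qr^i) ≤ Sv - pv M := fun M X =>
    tail_bound v hv0 Sv hSv M X
  rw [Metric.tendsto_atTop]
  intro ε hε
  -- choose M
  have hE : Tendsto (fun M => 1024*(Kv*(Su - pu M) + Ku*(Sv - pv M))) atTop (nhds 0) := by
    have h1 : Tendsto (fun M => Su - pu M) atTop (nhds 0) := by
      have := (tendsto_const_nhds : Tendsto (fun _ : ℕ => Su) atTop (nhds Su)).sub hpuS
      simpa using this
    have h2 : Tendsto (fun M => Sv - pv M) atTop (nhds 0) := by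
      have := (tendsto_const_nhds : Tendsto (fun _ : ℕ => Sv) atTop (nhds Sv)).sub hpvS
      simpa using this
    have := ((h1.const_mul Kv).add (h2.const_mul Ku)).const_mul (1024:ℝ)
    simpa using this
  have hLp : Tendsto (fun M => V * pu M + U * pv M) atTop (nhds (V * Su + U * Sv)) :=
    (hpuS.const_mul V).add (hpvS.const_mul U)
  obtain ⟨M1, hM1⟩ := (Metric.tendsto_atTop.mp hE) (ε/3) (by linarith)
  obtain ⟨M2, hM2⟩ := (Metric.tendsto_atTop.mp hLp) (ε/3) (by linarith)
  set M := max M1 M2 with hMdef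
  have hEM : 1024*(Kv*(Su - pu M) + Ku*(Sv - pv M)) < ε/3 := by
    have := hM1 M (le_max_left _ _)
    rw [Real.dist_eq] at this
    exact lt_of_abs_lt (by simpa using this)
  have hLM : |(V * pu M + U * pv M) - (V * Su + U * Sv)| < ε/3 := by
    have := hM2 M (le_max_right _ _)
    rwa [Real.dist_eq] at this
  -- head function
  set h : ℕ → ℝ := fun n => (∑ i ∈ range M, u i * (v (n-i) / a n))
      + (∑ j ∈ range M, v j * (u (n-j) / a n)) with hhdef
  have hh : Tendsto h atTop (nhds (V * pu M + U * pv M)) := by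
    have t1 : Tendsto (fun n => ∑ i ∈ range M, u i * (v (n-i) / a n)) atTop
        (nhds (∑ i ∈ range M, u i * (V * qr^i))) := by
      apply tendsto_finset_sum
      intro i _
      exact (head_tendsto v V hV i).const_mul (u i)
    have t2 : Tendsto (fun n => ∑ j ∈ range M, v j * (u (n-j) / a n)) atTop
        (nhds (∑ j ∈ range M, v j * (U * qr^j))) := by
      apply tendsto_finset_sum
      intro j _
      exact (head_tendsto u U hU j).const_mul (v j)
    have e1 : (∑ i ∈ range M, u i * (V * qr^i)) = V * pu M := by
      rw [hpudef, mul_sum]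
      apply sum_congr rfl
      intro i _
      ring
    have e2 : (∑ j ∈ range M, v j * (U * qr^j)) = U * pv M := by
      rw [hpvdef, mul_sum]
      apply sum_congr rfl
      intro j _
      ring
    rw [← e1, ← e2]
    exact t1.add t2
  obtain ⟨N3, hN3⟩ := (Metric.tendsto_atTop.mp hh) (ε/3) (by linarith)
  refine ⟨max N3 (2*M+2), fun n hn => ?_⟩
  have hnN3 : n ≥ N3 := le_trans (le_max_left _ _) hn
  have hn2M : n ≥ 2*M+2 := le_trans (le_max_right _ _) hn
  -- decomposition
  have hM_le : M ≤ n+1-M := by omega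
  have hM_le2 : n+1-M ≤ n+1 := by omega
  have hsplit : (∑ i ∈ range (n+1), u i * v (n-i))
      = (∑ i ∈ range M, u i * v (n-i)) + (∑ i ∈ Ico M (n+1-M), u i * v (n-i))
        + (∑ j ∈ range M, v j * u (n-j)) := by
    rw [range_eq_Ico, ← sum_Ico_consecutive _ (by omega : 0 ≤ M) (by omega : M ≤ n+1)]
    rw [← sum_Ico_consecutive _ hM_le hM_le2]
    have hrefl : (∑ i ∈ Ico (n+1-M) (n+1), u i * v (n-i)) = ∑ j ∈ range M, v j * u (n-j) := by
      have h1 : (∑ j ∈ Ico 0 M, u (n-j) * v (n-(n-j))) = ∑ i ∈ Ico (n+1-M) (n+1-0), u i * v (n-i) :=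
        sum_Ico_reflect (fun i => u i * v (n-i)) 0 (by omega : M ≤ n+1)
      rw [Nat.sub_zero] at h1
      rw [← h1, ← range_eq_Ico]
      apply sum_congr rfl
      intro j hj
      simp only [mem_range] at hj
      have : n - (n - j) = j := by omega
      rw [this]
      ring
    rw [hrefl, range_eq_Ico]
    ring
  -- middle bound
  have hmid_nonneg : 0 ≤ ∑ i ∈ Ico M (n+1-M), u i * v (n-i) :=
    sum_nonneg fun i _ => mul_nonneg (hu0 i) (hv0 _)
  have hmid : (∑ i ∈ Ico M (n+1-M), u i * v (n-i))
      ≤ (1024*(Kv*(Su - pu M) + Ku*(Sv - pv M))) * a n := by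
    have hsplit2 : (∑ i ∈ Ico M (n+1-M), u i * v (n-i))
        = (∑ i ∈ Ico M (n/2+1), u i * v (n-i)) + (∑ i ∈ Ico (n/2+1) (n+1-M), u i * v (n-i)) := by
      rw [sum_Ico_consecutive _ (by omega : M ≤ n/2+1) (by omega : n/2+1 ≤ n+1-M)]
    have hb1 : (∑ i ∈ Ico M (n/2+1), u i * v (n-i)) ≤ 1024 * Kv * (Su - pu M) * a n := by
      have step : ∀ i ∈ Ico M (n/2+1), u i * v (n-i) ≤ (1024 * Kv * a n) * (u i * qr^i) := by
        intro i hi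
        simp only [mem_Ico] at hi
        have hi2 : 2*i ≤ n+1 := by omega
        have hdom : a (n-i) ≤ 1024 * qr^i * a n := by
          have h1 := a_dom i (n-i) (by omega)
          rwa [show (n-i)+i = n from by omega] at h1
        have hv2 : v (n-i) ≤ Kv * (1024 * qr^i * a n) := by
          calc v (n-i) ≤ Kv * a (n-i) := hKv (n-i)
            _ ≤ Kv * (1024 * qr^i * a n) := mul_le_mul_of_nonneg_left hdom hKv_nonneg
        calc u i * v (n-i) ≤ u i * (Kv * (1024 * qr^i * a n)) :=
              mul_le_mul_of_nonneg_left hv2 (hu0 i)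
          _ = (1024 * Kv * a n) * (u i * qr^i) := by ring
      calc (∑ i ∈ Ico M (n/2+1), u i * v (n-i))
          ≤ ∑ i ∈ Ico M (n/2+1), (1024 * Kv * a n) * (u i * qr^i) := sum_le_sum step
        _ = (1024 * Kv * a n) * ∑ i ∈ Ico M (n/2+1), u i * qr^i := by rw [mul_sum]
        _ ≤ (1024 * Kv * a n) * (Su - pu M) := by
            apply mul_le_mul_of_nonneg_left (htailu M _)
            have := a_pos n
            positivity
        _ = 1024 * Kv * (Su - pu M) * a n := by ring
    have hb2 : (∑ i ∈ Ico (n/2+1) (n+1-M), u i * v (n-i)) ≤ 1024 * Ku * (Sv - pv M) * a n := by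
      have hrefl2 : (∑ i ∈ Ico (n/2+1) (n+1-M), u i * v (n-i))
          = ∑ j ∈ Ico M (n-n/2), u (n-j) * v j := by
        have h1 : (∑ j ∈ Ico M (n-n/2), u (n-j) * v (n-(n-j)))
            = ∑ i ∈ Ico (n+1-(n-n/2)) (n+1-M), u i * v (n-i) :=
          sum_Ico_reflect (fun i => u i * v (n-i)) M (by omega : n-n/2 ≤ n+1)
        have e : n+1-(n-n/2) = n/2+1 := by omega
        rw [e] at h1
        rw [← h1]
        apply sum_congr rfl
        intro j hj
        simp only [mem_Ico] at hj
        have : n - (n - j) = j := by omega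
        rw [this]
      rw [hrefl2]
      have step : ∀ j ∈ Ico M (n-n/2), u (n-j) * v j ≤ (1024 * Ku * a n) * (v j * qr^j) := by
        intro j hj
        simp only [mem_Ico] at hj
        have hdom : a (n-j) ≤ 1024 * qr^j * a n := by
          have h1 := a_dom j (n-j) (by omega)
          rwa [show (n-j)+j = n from by omega] at h1
        have hu2 : u (n-j) ≤ Ku * (1024 * qr^j * a n) := by
          calc u (n-j) ≤ Ku * a (n-j) := hKu (n-j)
            _ ≤ Ku * (1024 * qr^j * a n) := mul_le_mul_of_nonneg_left hdom hKu_nonneg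
        calc u (n-j) * v j ≤ (Ku * (1024 * qr^j * a n)) * v j :=
              mul_le_mul_of_nonneg_right hu2 (hv0 j)
          _ = (1024 * Ku * a n) * (v j * qr^j) := by ring
      calc (∑ j ∈ Ico M (n-n/2), u (n-j) * v j)
          ≤ ∑ j ∈ Ico M (n-n/2), (1024 * Ku * a n) * (v j * qr^j) := sum_le_sum step
        _ = (1024 * Ku * a n) * ∑ j ∈ Ico M (n-n/2), v j * qr^j := by rw [mul_sum]
        _ ≤ (1024 * Ku * a n) * (Sv - pv M) := by
            apply mul_le_mul_of_nonneg_left (htailv M _)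
            have := a_pos n
            positivity
        _ = 1024 * Ku * (Sv - pv M) * a n := by ring
    rw [hsplit2]
    nlinarith [hb1, hb2]
  -- assemble
  have hT : (∑ i ∈ range (n+1), u i * v (n-i)) / a n
      = h n + (∑ i ∈ Ico M (n+1-M), u i * v (n-i)) / a n := by
    rw [hsplit, hhdef]
    have e1 : (∑ i ∈ range M, u i * (v (n-i) / a n)) = (∑ i ∈ range M, u i * v (n-i)) / a n := by
      rw [sum_div]
      apply sum_congr rfl
      intro i _
      ring
    have e2 : (∑ j ∈ range M, v j * (u (n-j) / a n)) = (∑ j ∈ range M, v j * u (n-j)) / a n := by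
      rw [sum_div]
      apply sum_congr rfl
      intro j _
      ring
    simp only []
    rw [e1, e2]
    ring
  have hmid2 : 0 ≤ (∑ i ∈ Ico M (n+1-M), u i * v (n-i)) / a n ∧
      (∑ i ∈ Ico M (n+1-M), u i * v (n-i)) / a n < ε/3 := by
    constructor
    · exact div_nonneg hmid_nonneg (le_of_lt (a_pos n))
    · rw [div_lt_iff₀ (a_pos n)]
      calc (∑ i ∈ Ico M (n+1-M), u i * v (n-i))
          ≤ (1024*(Kv*(Su - pu M) + Ku*(Sv - pv M))) * a n := hmid
        _ < ε/3 * a n := by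
            apply mul_lt_mul_of_pos_right hEM (a_pos n)
  have hhn := hN3 n hnN3
  rw [Real.dist_eq] at hhn ⊢
  have : |(∑ i ∈ range (n+1), u i * v (n-i)) / a n - (V * Su + U * Sv)|
      ≤ |(∑ i ∈ Ico M (n+1-M), u i * v (n-i)) / a n| + |h n - (V * pu M + U * pv M)|
        + |(V * pu M + U * pv M) - (V * Su + U * Sv)| := by
    rw [hT]
    have e : h n + (∑ i ∈ Ico M (n+1-M), u i * v (n-i)) / a n - (V * Su + U * Sv)
        = ((∑ i ∈ Ico M (n+1-M), u i * v (n-i)) / a n) + (h n - (V * pu M + U * pv M))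
          + ((V * pu M + U * pv M) - (V * Su + U * Sv)) := by ring
    rw [e]
    exact le_trans (abs_add_le _ _) (by linarith [abs_add_le ((∑ i ∈ Ico M (n+1-M), u i * v (n-i)) / a n) (h n - (V * pu M + U * pv M))])
  have habs : |(∑ i ∈ Ico M (n+1-M), u i * v (n-i)) / a n| < ε/3 := by
    rw [abs_of_nonneg hmid2.1]
    exact hmid2.2
  linarith [this, habs, hhn, hLM]

noncomputable def abar (n : ℕ) : ℝ := if n = 0 then 0 else a n

lemma abar_nonneg (n : ℕ) : 0 ≤ abar n := by
  unfold abar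
  split
  · exact le_rfl
  · exact le_of_lt (a_pos n)

lemma abar_zero : abar 0 = 0 := rfl

lemma abar_div_tendsto : Tendsto (fun n => abar n / a n) atTop (nhds 1) := by
  apply Tendsto.congr' _ tendsto_const_nhds
  filter_upwards [eventually_ge_atTop 1] with n hn
  unfold abar
  rw [if_neg (by omega)]
  exact (div_self (ne_of_gt (a_pos n))).symm

lemma hasum_abar : HasSum (fun n => abar n * qr ^ n) (5/27) := by
  have hind : HasSum (fun n : ℕ => if n = 0 then (1:ℝ) else 0) 1 := hasSum_ite_eq 0 1
  have h := hsa.sub hind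
  have e : (fun n => a n * qr^n - if n = 0 then (1:ℝ) else 0) = fun n => abar n * qr^n := by
    funext n
    unfold abar
    rcases Nat.eq_zero_or_pos n with h0 | h0
    · subst h0
      simp [a_zero]
    · rw [if_neg (by omega), if_neg (by omega)]
      ring
  rw [e] at h
  rwa [show (5/27:ℝ) = 32 / 27 - 1 by norm_num]

lemma conv_pow (f g : ℕ → ℝ) (n : ℕ) : (∑ i ∈ range (n+1), f i * g (n-i)) * qr^n
    = ∑ i ∈ range (n+1), (f i * qr^i) * (g (n-i) * qr^(n-i)) := by
  rw [sum_mul]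
  apply sum_congr rfl
  intro i hi
  simp only [mem_range] at hi
  have hp : qr^i * qr^(n-i) = qr^n := by rw [← pow_add]; congr 1; omega
  calc f i * g (n - i) * qr ^ n = (f i * g (n-i)) * (qr^i * qr^(n-i)) := by rw [hp]
    _ = (f i * qr^i) * (g (n-i) * qr^(n-i)) := by ring

noncomputable def conv2 (n : ℕ) : ℝ := ∑ i ∈ range (n+1), abar i * abar (n - i)
noncomputable def conv3 (n : ℕ) : ℝ := ∑ i ∈ range (n+1), abar i * conv2 (n - i)
noncomputable def conv4 (n : ℕ) : ℝ := ∑ i ∈ range (n+1), abar i * conv3 (n - i)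

lemma conv2_nonneg (n : ℕ) : 0 ≤ conv2 n :=
  sum_nonneg fun i _ => mul_nonneg (abar_nonneg i) (abar_nonneg _)
lemma conv3_nonneg (n : ℕ) : 0 ≤ conv3 n :=
  sum_nonneg fun i _ => mul_nonneg (abar_nonneg i) (conv2_nonneg _)

lemma hc2_t : Tendsto (fun n => conv2 n / a n) atTop (nhds (10/27)) := by
  have h := conv_tendsto abar abar abar_nonneg abar_nonneg 1 1 (5/27) (5/27)
    abar_div_tendsto abar_div_tendsto hasum_abar hasum_abar
  convert h using 2
  · rfl
  · norm_num

lemma hasum_conv2 : HasSum (fun n => conv2 n * qr ^ n) (25/729) := by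
  have h := cauchy _ _ _ _ (fun n => mul_nonneg (abar_nonneg n) (qr_pow_nonneg n))
    (fun n => mul_nonneg (abar_nonneg n) (qr_pow_nonneg n)) hasum_abar hasum_abar
  have e : (fun n => ∑ i ∈ range (n+1), (abar i * qr^i) * (abar (n-i) * qr^(n-i)))
      = fun n => conv2 n * qr^n := funext fun n => (conv_pow abar abar n).symm
  rw [e] at h
  rwa [show (25/729:ℝ) = 5/27 * (5/27) by norm_num]

lemma hc3_t : Tendsto (fun n => conv3 n / a n) atTop (nhds (75/729)) := by
  have h := conv_tendsto abar conv2 abar_nonneg conv2_nonneg 1 (10/27) (5/27) (25/729)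
    abar_div_tendsto hc2_t hasum_abar hasum_conv2
  convert h using 2
  · rfl
  · norm_num

lemma hasum_conv3 : HasSum (fun n => conv3 n * qr ^ n) (125/19683) := by
  have h := cauchy _ _ _ _ (fun n => mul_nonneg (abar_nonneg n) (qr_pow_nonneg n))
    (fun n => mul_nonneg (conv2_nonneg n) (qr_pow_nonneg n)) hasum_abar hasum_conv2
  have e : (fun n => ∑ i ∈ range (n+1), (abar i * qr^i) * (conv2 (n-i) * qr^(n-i)))
      = fun n => conv3 n * qr^n := funext fun n => (conv_pow abar conv2 n).symm
  rw [e] at h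
  rwa [show (125/19683:ℝ) = 5/27 * (25/729) by norm_num]

lemma hc4_t : Tendsto (fun n => conv4 n / a n) atTop (nhds (500/19683)) := by
  have h := conv_tendsto abar conv3 abar_nonneg conv3_nonneg 1 (75/729) (5/27) (125/19683)
    abar_div_tendsto hc3_t hasum_abar hasum_conv3
  convert h using 2
  · rfl
  · norm_num

lemma conv_abar_eq (X : ℕ → ℝ) (hX0 : X 0 = 0) (n : ℕ) :
    (∑ i ∈ range (n+1), abar i * X (n-i)) = ∑ i ∈ Ico 1 n, a i * X (n-i) := by
  cases n with
  | zero => simp [abar_zero]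
  | succ n =>
    rw [sum_range_succ']
    have h0 : abar 0 * X (n+1-0) = 0 := by rw [abar_zero]; ring
    rw [h0, add_zero, sum_range_succ]
    have htop : abar (n+1) * X (n+1-(n+1)) = 0 := by
      rw [Nat.sub_self, hX0]; ring
    rw [htop, add_zero, Finset.sum_Ico_eq_sum_range]
    simp only [Nat.add_sub_cancel]
    apply sum_congr rfl
    intro i hi
    simp only [mem_range] at hi
    have e2 : 1 + i = i + 1 := Nat.add_comm 1 i
    rw [e2]
    have e1 : abar (i+1) = a (i+1) := by unfold abar; rw [if_neg (by omega)]
    rw [e1]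

lemma conv2_zero : conv2 0 = 0 := by unfold conv2; simp [abar_zero]
lemma conv3_zero : conv3 0 = 0 := by unfold conv3; simp [abar_zero]

lemma conv2_eq (m : ℕ) : conv2 m = ∑ k ∈ Ico 1 m, a k * a (m-k) := by
  unfold conv2
  rw [conv_abar_eq abar abar_zero m]
  apply sum_congr rfl
  intro k hk
  simp only [mem_Ico] at hk
  congr 1
  unfold abar
  rw [if_neg (by omega)]

lemma conv4_eq (n : ℕ) : conv4 n
    = ∑ i ∈ Ico 1 n, ∑ j ∈ Ico 1 (n-i), ∑ k ∈ Ico 1 (n-i-j), a i * a j * a k * a (n-i-j-k) := by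
  unfold conv4
  rw [conv_abar_eq conv3 conv3_zero n]
  apply sum_congr rfl
  intro i _
  unfold conv3
  rw [conv_abar_eq conv2 conv2_zero (n-i), mul_sum]
  apply sum_congr rfl
  intro j _
  rw [conv2_eq (n-i-j), mul_sum, mul_sum]
  apply sum_congr rfl
  intro k _
  ring

theorem stmt13 :
    Tendsto (fun n : ℕ =>
        (∑ i ∈ Finset.Ico 1 n, ∑ j ∈ Finset.Ico 1 (n - i), ∑ k ∈ Finset.Ico 1 (n - i - j),
          a i * a j * a k * a (n - i - j - k)) / a n)
      atTop (nhds (500 / 19683)) := by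
  apply hc4_t.congr
  intro n
  rw [conv4_eq n]
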